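/- Fix an integer k ≥ 1, data a₁,…,a_k ∈ (0,∞) and z₁,…,z_k ∈ {0,1}, and suppose the observations are perfectly separated at some α > 0, i.e. for every i one has z_i = 1 if and only if a_i > α (and a_i ≠ α for all i). Then the likelihood ℓ_k(z|a,(α,β)) converges to 1 as β → 0; in particular it does not converge to zero. -/

import Mathlib

open MeasureTheory Real Filter Set

/-- The standard Gaussian cumulative distribution function. -/
noncomputable def Phi (x : ℝ) : ℝ :=
  (Real.sqrt (2 * Real.pi))⁻¹ * ∫ t in Set.Iic x, Real.exp (-t ^ 2 / 2)

/-- The likelihood of the log-normal (probit) fragility model. -/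
noncomputable def lik (k : ℕ) (a : Fin k → ℝ) (z : Fin k → ℕ) (α β : ℝ) : ℝ :=
  ∏ i, Phi (Real.log (a i / α) / β) ^ (z i) *
    (1 - Phi (Real.log (a i / α) / β)) ^ (1 - z i)

lemma gauss_integrable : Integrable (fun t : ℝ => Real.exp (-t ^ 2 / 2)) := by
  have := integrable_exp_neg_mul_sq (b := (1/2 : ℝ)) (by norm_num)
  convert this using 2 with t
  ring_nf

lemma gauss_integral : (∫ t : ℝ, Real.exp (-t ^ 2 / 2)) = Real.sqrt (2 * Real.pi) := by
  have := integral_gaussian (1/2 : ℝ)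
  rw [show Real.pi / (1/2) = 2 * Real.pi by ring] at this
  rw [← this]
  congr 1 with t
  ring_nf

lemma sqrt_two_pi_ne : Real.sqrt (2 * Real.pi) ≠ 0 := by
  positivity

lemma Phi_atTop : Tendsto Phi atTop (nhds 1) := by
  have h := (MeasureTheory.aecover_Iic (μ := volume) (l := atTop) (b := id)
    tendsto_id).integral_tendsto_of_countably_generated gauss_integrable
  rw [gauss_integral] at h
  have h2 := (tendsto_const_nhds (x := (Real.sqrt (2 * Real.pi))⁻¹)
    (f := atTop (α := ℝ))).mul h
  rwa [inv_mul_cancel₀ sqrt_two_pi_ne] at h2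

lemma Phi_atBot : Tendsto Phi atBot (nhds 0) := by
  have h := (MeasureTheory.aecover_Ici (μ := volume) (l := atBot) (a := id)
    tendsto_id).integral_tendsto_of_countably_generated gauss_integrable
  rw [gauss_integral] at h
  have key : Tendsto (fun x : ℝ => ∫ t in Set.Iic x, Real.exp (-t ^ 2 / 2)) atBot (nhds 0) := by
    have h2 : ∀ x : ℝ, (∫ t in Set.Iic x, Real.exp (-t ^ 2 / 2))
        = Real.sqrt (2 * Real.pi) - ∫ t in Set.Ici x, Real.exp (-t ^ 2 / 2) := by
      intro x
      have h3 := intervalIntegral.integral_Iic_add_Ioi (b := x) gauss_integrable.integrableOn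
        gauss_integrable.integrableOn
      rw [gauss_integral] at h3
      have h4 : (∫ t in Set.Ici x, Real.exp (-t ^ 2 / 2))
          = ∫ t in Set.Ioi x, Real.exp (-t ^ 2 / 2) :=
        MeasureTheory.integral_Ici_eq_integral_Ioi
      linarith
    simp only [h2]
    have := (tendsto_const_nhds (x := Real.sqrt (2 * Real.pi)) (f := atBot (α := ℝ))).sub h
    simpa using this
  have h2 := (tendsto_const_nhds (x := (Real.sqrt (2 * Real.pi))⁻¹)
    (f := atBot (α := ℝ))).mul key
  rwa [mul_zero] at h2

/-- Fix `k ≥ 1`, data `aᵢ ∈ (0,∞)`, `zᵢ ∈ {0,1}`, perfectly separated at some `α > 0`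
(i.e. `zᵢ = 1 ↔ aᵢ > α`, and `aᵢ ≠ α` for all `i`). Then `ℓ_k(z|a,(α,β)) → 1` as
`β → 0⁺`. -/
theorem stmt6 (k : ℕ) (hk : 1 ≤ k) (a : Fin k → ℝ) (ha : ∀ i, 0 < a i)
    (z : Fin k → ℕ) (hz : ∀ i, z i = 0 ∨ z i = 1) (α : ℝ) (hα : 0 < α)
    (hsep : ∀ i, z i = 1 ↔ α < a i) (hne : ∀ i, a i ≠ α) :
    Filter.Tendsto (fun β : ℝ => lik k a z α β) (nhdsWithin 0 (Set.Ioi 0))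
      (nhds 1) := by
  have main : Filter.Tendsto (fun β : ℝ => lik k a z α β) (nhdsWithin 0 (Set.Ioi 0))
      (nhds (∏ _i : Fin k, (1 : ℝ))) := by
    unfold lik
    apply tendsto_finset_prod
    intro i _
    rcases hz i with h0 | h1
    · -- z i = 0, so a i < α, log < 0
      have hlt : a i < α := by
        rcases lt_or_gt_of_ne (hne i) with h | h
        · exact h
        · exact absurd ((hsep i).mpr h) (by simp [h0])
      have hL : Real.log (a i / α) < 0 :=
        Real.log_neg (div_pos (ha i) hα) ((div_lt_one hα).mpr hlt)
      have hdiv : Filter.Tendsto (fun β : ℝ => Real.log (a i / α) / β)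
          (nhdsWithin 0 (Set.Ioi 0)) atBot := by
        have hpos : 0 < -Real.log (a i / α) := by linarith
        have h1 : Filter.Tendsto (fun β : ℝ => -Real.log (a i / α) * β⁻¹)
            (nhdsWithin 0 (Set.Ioi 0)) atTop :=
          Filter.Tendsto.const_mul_atTop hpos tendsto_inv_nhdsGT_zero
        have h2 := tendsto_neg_atTop_atBot.comp h1
        refine h2.congr fun β => by simp [Function.comp, div_eq_mul_inv]
      have hPhi := Phi_atBot.comp hdiv
      have := (tendsto_const_nhds (x := (1:ℝ))
        (f := nhdsWithin (0:ℝ) (Set.Ioi 0))).sub hPhi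
      simpa [h0, Function.comp] using this
    · -- z i = 1, so α < a i, log > 0
      have hgt : α < a i := (hsep i).mp h1
      have hL : 0 < Real.log (a i / α) :=
        Real.log_pos ((one_lt_div hα).mpr hgt)
      have hdiv : Filter.Tendsto (fun β : ℝ => Real.log (a i / α) / β)
          (nhdsWithin 0 (Set.Ioi 0)) atTop := by
        have h2 : Filter.Tendsto (fun β : ℝ => Real.log (a i / α) * β⁻¹)
            (nhdsWithin 0 (Set.Ioi 0)) atTop :=
          Filter.Tendsto.const_mul_atTop hL tendsto_inv_nhdsGT_zero
        refine h2.congr fun β => by simp [Function.comp, div_eq_mul_inv]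
      have hPhi := Phi_atTop.comp hdiv
      simpa [h1, Function.comp_def] using hPhi
  simpa using main
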